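/- (Dyson's conjecture.) Let a_1, ..., a_n be positive integers and set a = a_1 + ... + a_n. Then the coefficient of the monomial ∏_{i=1}^n x_i^{a - a_i} in the integer polynomial f(x_1, ..., x_n) = ∏_{1 ≤ i < j ≤ n} (-1)^{a_j} (x_j - x_i)^{a_i + a_j} equals the multinomial coefficient a! / (a_1! a_2! ⋯ a_n!). (Equivalently, the constant term of ∏_{1 ≤ i ≠ j ≤ n} (1 - x_i/x_j)^{a_i}, viewed as a Laurent polynomial over the integers, equals a!/(a_1! ⋯ a_n!).) -/

import Mathlib

set_option synthInstance.maxHeartbeats 1000000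
set_option maxHeartbeats 1000000

open MvPolynomial Finset

noncomputable section DysonAux

variable {n : ℕ}

abbrev MP (n : ℕ) := MvPolynomial (Fin n) ℤ
abbrev KK (n : ℕ) := FractionRing (MP n)

def xx (j : Fin n) : KK n := algebraMap (MP n) (KK n) (X j)

def dysonG (S : Finset (Fin n)) (a : Fin n → ℕ) : MP n :=
  ∏ p ∈ (S ×ˢ S).filter (fun p => p.1 < p.2),
    ((-1) ^ (a p.2) * (X p.2 - X p.1) ^ (a p.1 + a p.2))

def dysonM (S : Finset (Fin n)) (a : Fin n → ℕ) : Fin n →₀ ℕ :=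
  Finsupp.equivFunOnFinite.symm (fun i => if i ∈ S then (∑ j ∈ S, a j) - a i else 0)

lemma xx_injective : Function.Injective (xx (n := n)) :=
  (IsFractionRing.injective (MP n) (KK n)).comp (X_injective)

lemma prod_pairs (S : Finset (Fin n)) (f : Fin n → Fin n → MP n) :
    ∏ i ∈ S, ∏ j ∈ S.filter (fun j => i < j), f i j
      = ∏ p ∈ (S ×ˢ S).filter (fun p => p.1 < p.2), f p.1 p.2 := by
  rw [Finset.prod_filter, Finset.prod_product]
  simp [Finset.prod_filter]

lemma lagrange_id {S : Finset (Fin n)} (hS : S.Nonempty) :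
    ∑ k ∈ S, ∏ j ∈ S.erase k, (xx j * (xx j - xx k)⁻¹) = 1 := by
  classical
  have h := Lagrange.sum_basis (v := xx) (xx_injective.injOn) hS
  have h2 := congrArg (Polynomial.eval (0 : KK n)) h
  rw [Polynomial.eval_finset_sum, Polynomial.eval_one] at h2
  rw [← h2]
  apply Finset.sum_congr rfl
  intro k hk
  rw [Lagrange.basis, Polynomial.eval_prod]
  apply Finset.prod_congr rfl
  intro j hj
  have hjk : xx j ≠ xx k := fun h => (Finset.mem_erase.mp hj).1 (xx_injective h)
  rw [Lagrange.basisDivisor]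
  simp only [Polynomial.eval_mul, Polynomial.eval_C, Polynomial.eval_sub, Polynomial.eval_X]
  rw [zero_sub]
  have h1 : xx k - xx j ≠ 0 := sub_ne_zero.mpr (Ne.symm hjk)
  have h2 : xx j - xx k ≠ 0 := sub_ne_zero.mpr hjk
  field_simp
  ring

lemma dysonG_step {S : Finset (Fin n)} {a : Fin n → ℕ} {k : Fin n} (hk : k ∈ S) (hak : 1 ≤ a k) :
    dysonG S a = dysonG S (Function.update a k (a k - 1)) * ∏ j ∈ S.erase k, (X j - X k) := by
  classical
  set a' := Function.update a k (a k - 1) with ha'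
  have hc : ∀ p ∈ (S ×ˢ S).filter (fun p : Fin n × Fin n => p.1 < p.2),
      ((-1 : MP n) ^ (a p.2) * (X p.2 - X p.1) ^ (a p.1 + a p.2))
      = ((-1) ^ (a' p.2) * (X p.2 - X p.1) ^ (a' p.1 + a' p.2)) *
        (if p.1 = k then X p.2 - X k else if p.2 = k then X p.1 - X k else 1) := by
    rintro ⟨i, j⟩ hp
    simp only [Finset.mem_filter, Finset.mem_product] at hp
    obtain ⟨⟨hi, hj⟩, hij⟩ := hp
    by_cases h1 : i = k
    · have hkj : k < j := by rw [← h1]; exact hij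
      have hjk : j ≠ k := ne_of_gt hkj
      rw [if_pos h1, ha', Function.update_of_ne hjk, h1, Function.update_self]
      rw [show a k + a j = (a k - 1 + a j) + 1 by omega, pow_succ]
      ring
    · by_cases h2 : j = k
      · rw [if_neg h1, if_pos h2, ha', Function.update_of_ne h1, h2, Function.update_self]
        have hpow : ((-1 : MP n)) ^ (a k) = (-1) ^ (a k - 1) * (-1) := by
          rw [← pow_succ]; congr 1; omega
        rw [hpow, show a i + a k = (a i + (a k - 1)) + 1 by omega, pow_succ]
        ring
      · rw [if_neg h1, if_neg h2, ha', Function.update_of_ne h1, Function.update_of_ne h2,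
          mul_one]
  rw [dysonG, Finset.prod_congr rfl hc, Finset.prod_mul_distrib, dysonG]
  congr 1
  rw [← Finset.prod_filter_mul_prod_filter_not _ (fun p : Fin n × Fin n => p.1 = k ∨ p.2 = k)]
  have h2 : ∏ p ∈ ((S ×ˢ S).filter (fun p : Fin n × Fin n => p.1 < p.2)).filter
      (fun p => ¬(p.1 = k ∨ p.2 = k)),
      (if p.1 = k then X p.2 - X k else if p.2 = k then X p.1 - X k else (1 : MP n)) = 1 := by
    apply Finset.prod_eq_one
    rintro ⟨i, j⟩ hp
    simp only [Finset.mem_filter, not_or] at hp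
    rw [if_neg hp.2.1, if_neg hp.2.2]
  rw [h2, mul_one]
  apply Finset.prod_nbij' (i := fun p => if p.1 = k then p.2 else p.1)
      (j := fun j => if j < k then (j, k) else (k, j))
  · rintro ⟨i, j⟩ hp
    simp only [Finset.mem_filter, Finset.mem_product] at hp
    obtain ⟨⟨⟨hi, hj⟩, hij⟩, hor⟩ := hp
    by_cases h1 : i = k
    · rw [if_pos h1]
      have hkj : k < j := by rw [← h1]; exact hij
      exact Finset.mem_erase.mpr ⟨ne_of_gt hkj, hj⟩
    · rw [if_neg h1]
      rcases hor with h | h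
      · exact absurd h h1
      · exact Finset.mem_erase.mpr ⟨h1, hi⟩
  · intro j hj
    rw [Finset.mem_erase] at hj
    by_cases h : j < k
    · rw [if_pos h]
      exact Finset.mem_filter.mpr ⟨Finset.mem_filter.mpr
        ⟨Finset.mem_product.mpr ⟨hj.2, hk⟩, h⟩, Or.inr rfl⟩
    · have hkj : k < j := lt_of_le_of_ne (not_lt.mp h) (Ne.symm hj.1)
      rw [if_neg h]
      exact Finset.mem_filter.mpr ⟨Finset.mem_filter.mpr
        ⟨Finset.mem_product.mpr ⟨hk, hj.2⟩, hkj⟩, Or.inl rfl⟩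
  · rintro ⟨i, j⟩ hp
    simp only [Finset.mem_filter, Finset.mem_product] at hp
    obtain ⟨⟨⟨hi, hj⟩, hij⟩, hor⟩ := hp
    by_cases h1 : i = k
    · rw [if_pos h1]
      have hkj : k < j := by rw [← h1]; exact hij
      rw [if_neg (not_lt.mpr (le_of_lt hkj))]
      rw [h1]
    · rcases hor with h | h
      · exact absurd h h1
      · rw [if_neg h1, if_pos (h ▸ hij), h]
  · intro j hj
    rw [Finset.mem_erase] at hj
    by_cases h : j < k
    · rw [if_pos h]; rw [if_neg (ne_of_lt h)]
    · have hkj : k < j := lt_of_le_of_ne (not_lt.mp h) (Ne.symm hj.1)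
      rw [if_neg h, if_pos rfl]
  · rintro ⟨i, j⟩ hp
    simp only [Finset.mem_filter, Finset.mem_product] at hp
    obtain ⟨⟨⟨hi, hj⟩, hij⟩, hor⟩ := hp
    by_cases h1 : i = k
    · simp [h1]
    · rcases hor with h | h
      · exact absurd h h1
      · simp [h1, h]

lemma dysonG_rec {S : Finset (Fin n)} {a : Fin n → ℕ} (hS : S.Nonempty)
    (ha : ∀ i ∈ S, 1 ≤ a i) :
    dysonG S a = ∑ k ∈ S, dysonG S (Function.update a k (a k - 1)) * ∏ j ∈ S.erase k, X j := by
  classical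
  apply IsFractionRing.injective (MP n) (KK n)
  set f := algebraMap (MP n) (KK n) with hf
  have hne : ∀ {j k : Fin n}, j ≠ k → xx j - xx k ≠ 0 := fun h =>
    sub_ne_zero.mpr (fun he => h (xx_injective he))
  have hPne : ∀ k, (∏ j ∈ S.erase k, (xx j - xx k)) ≠ 0 := by
    intro k
    apply Finset.prod_ne_zero_iff.mpr
    intro j hj
    exact hne (Finset.mem_erase.mp hj).1
  have key : ∀ k ∈ S, f (dysonG S (Function.update a k (a k - 1)))
      = f (dysonG S a) * (∏ j ∈ S.erase k, (xx j - xx k))⁻¹ := by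
    intro k hk
    have h1 := congrArg f (dysonG_step hk (ha k hk))
    rw [map_mul, map_prod] at h1
    simp only [map_sub] at h1
    have hxx : ∀ j : Fin n, f (X j) = xx j := fun _ => rfl
    simp only [hxx] at h1
    rw [h1, mul_assoc, mul_inv_cancel₀ (hPne k), mul_one]
  rw [map_sum]
  have h3 : ∀ k ∈ S, f (dysonG S (Function.update a k (a k - 1)) * ∏ j ∈ S.erase k, X j)
      = f (dysonG S a) * ∏ j ∈ S.erase k, (xx j * (xx j - xx k)⁻¹) := by
    intro k hk
    rw [map_mul, map_prod, key k hk]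
    have hxx : ∀ j : Fin n, f (X j) = xx j := fun _ => rfl
    simp only [hxx]
    rw [Finset.prod_mul_distrib, ← Finset.prod_inv_distrib]
    ring
  rw [Finset.sum_congr rfl h3, ← Finset.mul_sum, lagrange_id hS, mul_one]

lemma Padd {k : Fin n} {s : ℕ} {x y : MP n}
    (hx : x = 0 ∨ degreeOf k x < s) (hy : y = 0 ∨ degreeOf k y < s) :
    x + y = 0 ∨ degreeOf k (x + y) < s := by
  rcases hx with rfl | hx
  · simpa using hy
  rcases hy with rfl | hy
  · right; simpa using hx
  right; exact lt_of_le_of_lt (degreeOf_add_le _ _ _) (max_lt hx hy)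

lemma topterm (T : Finset (Fin n)) (b : Fin n → ℕ) (k : Fin n) (hk : k ∉ T) :
    ∃ R : MP n, (∏ i ∈ T, (X k - X i) ^ (b i) = X k ^ (∑ i ∈ T, b i) + R)
      ∧ (R = 0 ∨ degreeOf k R < ∑ i ∈ T, b i) := by
  classical
  induction T using Finset.cons_induction with
  | empty => exact ⟨0, by simp⟩
  | cons i T' hi ih =>
    have hkT' : k ∉ T' := fun h => hk (Finset.mem_cons_of_mem h)
    have hki : k ≠ i := fun h => hk (h ▸ Finset.mem_cons_self i T')
    obtain ⟨R, hR, hRd⟩ := ih hkT'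
    have hsingle : ∃ R₁ : MP n, (X k - X i) ^ (b i) = X k ^ (b i) + R₁
        ∧ (R₁ = 0 ∨ degreeOf k R₁ < b i) := by
      set m := b i with hm
      rcases Nat.eq_zero_or_pos m with h0 | hpos
      · exact ⟨0, by simp [h0]⟩
      refine ⟨∑ j ∈ Finset.range m, X k ^ j * (-X i) ^ (m - j) * C ((m.choose j : ℤ)), ?_, ?_⟩
      · have := add_pow (X k : MP n) (-X i) m
        rw [show (X k : MP n) + -X i = X k - X i by ring] at this
        rw [this, Finset.sum_range_succ]
        simp only [Nat.sub_self, pow_zero, mul_one, Nat.choose_self, Nat.cast_one, map_one]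
        rw [add_comm]
        congr 1
      · right
        apply lt_of_le_of_lt (degreeOf_sum_le _ _ _)
        rw [Finset.sup_lt_iff (by simpa using hpos : (⊥ : ℕ) < m)]
        intro j hj
        have h1 : degreeOf k (X k ^ j * (-X i) ^ (m - j) * C ((m.choose j : ℤ)) : MP n)
            ≤ j := by
          apply le_trans (degreeOf_mul_le _ _ _)
          rw [degreeOf_C, add_zero]
          apply le_trans (degreeOf_mul_le _ _ _)
          have h2 : degreeOf k ((X k : MP n) ^ j) ≤ j := by
            apply le_trans (degreeOf_pow_le _ _ _)
            simp [degreeOf_X]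
          have h3 : degreeOf k ((-X i : MP n) ^ (m - j)) = 0 := by
            apply Nat.le_zero.mp
            apply le_trans (degreeOf_pow_le _ _ _)
            rw [degreeOf_neg, degreeOf_X _ _, if_neg hki]
            simp
          omega
        exact lt_of_le_of_lt h1 (Finset.mem_range.mp hj)
    obtain ⟨R₁, hR₁, hR₁d⟩ := hsingle
    refine ⟨X k ^ (b i) * R + R₁ * X k ^ (∑ i ∈ T', b i) + R₁ * R, ?_, ?_⟩
    · rw [Finset.prod_cons, Finset.sum_cons, hR, hR₁, pow_add]
      ring
    · have hXpow : ∀ (e : ℕ), degreeOf k ((X k : MP n) ^ e) ≤ e := fun e =>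
        le_trans (degreeOf_pow_le _ _ _) (by simp [degreeOf_X])
      apply Padd
      apply Padd
      · rcases hRd with rfl | hRd
        · left; simp
        · right
          apply lt_of_le_of_lt (degreeOf_mul_le _ _ _)
          have := hXpow (b i)
          have hsum : ∑ j ∈ Finset.cons i T' hi, b j = b i + ∑ j ∈ T', b j :=
            Finset.sum_cons hi
          omega
      · rcases hR₁d with rfl | hR₁d
        · left; simp
        · right
          apply lt_of_le_of_lt (degreeOf_mul_le _ _ _)
          have := hXpow (∑ i ∈ T', b i)
          have hsum : ∑ j ∈ Finset.cons i T' hi, b j = b i + ∑ j ∈ T', b j :=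
            Finset.sum_cons hi
          omega
      · rcases hR₁d with rfl | hR₁d
        · left; simp
        rcases hRd with rfl | hRd
        · left; simp
        · right
          apply lt_of_le_of_lt (degreeOf_mul_le _ _ _)
          have hsum : ∑ j ∈ Finset.cons i T' hi, b j = b i + ∑ j ∈ T', b j :=
            Finset.sum_cons hi
          omega

lemma coeff_boundary {S : Finset (Fin n)} {k : Fin n} (hk : k ∉ S) (p : MP n)
    (hp : ∀ u ∈ p.support, u k = 0) (b : Fin n → ℕ) (m : Fin n →₀ ℕ) (hm : m k = 0) :
    coeff (m + Finsupp.single k (∑ i ∈ S, b i)) (p * ∏ i ∈ S, (X k - X i) ^ (b i))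
      = coeff m p := by
  classical
  obtain ⟨R, hR, hRd⟩ := topterm S b k hk
  set s := ∑ i ∈ S, b i with hs
  rw [hR, mul_add, coeff_add]
  have h1 : coeff (m + Finsupp.single k s) (p * X k ^ s) = coeff m p := by
    rw [X_pow_eq_monomial, coeff_mul_monomial, mul_one]
  have h2 : coeff (m + Finsupp.single k s) (p * R) = 0 := by
    rcases hRd with rfl | hRd
    · simp
    apply MvPolynomial.notMem_support_iff.mp
    intro hmem
    have := MvPolynomial.support_mul p R hmem
    rw [Finset.mem_add] at this
    obtain ⟨u, hu, v, hv, huv⟩ := this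
    have h3 : v k < s := lt_of_le_of_lt (monomial_le_degreeOf k hv) hRd
    have h4 : (m + Finsupp.single k s) k = s := by simp [hm]
    have h5 : (u + v) k = u k + v k := rfl
    rw [← huv] at h4
    rw [h5, hp u hu, zero_add] at h4
    omega
  rw [h1, h2, add_zero]

lemma dysonG_support {S : Finset (Fin n)} (a : Fin n → ℕ) {k : Fin n} (hk : k ∉ S) :
    ∀ u ∈ (dysonG S a).support, u k = 0 := by
  classical
  intro u hu
  by_contra h
  have hkv : k ∈ (dysonG S a).vars :=
    (mem_vars k).mpr ⟨u, hu, Finsupp.mem_support_iff.mpr h⟩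
  have hsub : (dysonG S a).vars ⊆ S := by
    refine Finset.Subset.trans (vars_prod _) ?_
    intro j hj
    rw [Finset.mem_biUnion] at hj
    obtain ⟨p, hp, hjp⟩ := hj
    simp only [Finset.mem_filter, Finset.mem_product] at hp
    have h1 : ((-1 : MP n) ^ (a p.2) * (X p.2 - X p.1) ^ (a p.1 + a p.2)).vars
        ⊆ {p.2} ∪ {p.1} := by
      refine Finset.Subset.trans (vars_mul _ _) ?_
      apply Finset.union_subset
      · refine Finset.Subset.trans (vars_pow _ _) ?_
        rw [show (-1 : MP n) = C (-1) by simp]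
        simp [vars_C]
      · refine Finset.Subset.trans (vars_pow _ _) ?_
        refine Finset.Subset.trans (vars_sub_subset _) ?_
        rw [vars_X, vars_X]
    have := h1 hjp
    simp only [Finset.mem_union, Finset.mem_singleton] at this
    rcases this with rfl | rfl
    · exact hp.1.2
    · exact hp.1.1
  exact hk (hsub hkv)

lemma coeff_mul_prod_X (T : Finset (Fin n)) (p : MP n) (m : Fin n →₀ ℕ) :
    coeff (m + ∑ j ∈ T, Finsupp.single j 1) (p * ∏ j ∈ T, X j) = coeff m p := by
  classical
  induction T using Finset.cons_induction with
  | empty => simp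
  | cons j T hj ih =>
    rw [Finset.prod_cons, Finset.sum_cons]
    rw [show p * (X j * ∏ i ∈ T, X i) = (p * ∏ i ∈ T, X i) * X j by ring]
    rw [show m + (Finsupp.single j 1 + ∑ i ∈ T, Finsupp.single i 1)
        = (m + ∑ i ∈ T, Finsupp.single i 1) + Finsupp.single j 1 by
      rw [add_comm (Finsupp.single j 1), ← add_assoc]]
    rw [coeff_mul_X, ih]

lemma mult_rec {S : Finset (Fin n)} {a : Fin n → ℕ} (hS : S.Nonempty)
    (ha : ∀ i ∈ S, 1 ≤ a i) :
    Nat.multinomial S a = ∑ k ∈ S, Nat.multinomial S (Function.update a k (a k - 1)) := by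
  classical
  have hpos : 0 < ∏ i ∈ S, (a i).factorial := Finset.prod_pos fun i _ => Nat.factorial_pos _
  apply Nat.eq_of_mul_eq_mul_left hpos
  rw [Nat.multinomial_spec, Finset.mul_sum]
  have hσpos : 1 ≤ ∑ i ∈ S, a i := by
    obtain ⟨i, hi⟩ := hS
    calc 1 ≤ a i := ha i hi
    _ ≤ ∑ i ∈ S, a i := Finset.single_le_sum (fun _ _ => Nat.zero_le _) hi
  have hterm : ∀ k ∈ S, (∏ i ∈ S, (a i).factorial) *
        Nat.multinomial S (Function.update a k (a k - 1))
      = a k * ((∑ i ∈ S, a i) - 1).factorial := by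
    intro k hk
    have hsum : ∑ i ∈ S, Function.update a k (a k - 1) i = (∑ i ∈ S, a i) - 1 := by
      have hs1 : ∑ i ∈ S.erase k, Function.update a k (a k - 1) i = ∑ i ∈ S.erase k, a i :=
        Finset.sum_congr rfl (fun i hi => Function.update_of_ne (Finset.mem_erase.mp hi).1 _ _)
      have h2 : a k + ∑ i ∈ S.erase k, a i = ∑ i ∈ S, a i := Finset.add_sum_erase _ _ hk
      rw [← Finset.add_sum_erase _ _ hk, Function.update_self, hs1]
      have h3 := ha k hk
      omega
    have herase : ∏ i ∈ S.erase k, ((Function.update a k (a k - 1)) i).factorial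
        = ∏ i ∈ S.erase k, (a i).factorial :=
      Finset.prod_congr rfl
        (fun i hi => by rw [Function.update_of_ne (Finset.mem_erase.mp hi).1])
    have h1 : ∏ i ∈ S, (a i).factorial
        = a k * ∏ i ∈ S, ((Function.update a k (a k - 1)) i).factorial := by
      have hu : ∏ i ∈ S, ((Function.update a k (a k - 1)) i).factorial
          = (a k - 1).factorial * ∏ i ∈ S.erase k, (a i).factorial := by
        rw [← Finset.mul_prod_erase _ _ hk, Function.update_self, herase]
      rw [hu, ← mul_assoc, Nat.mul_factorial_pred (Nat.one_le_iff_ne_zero.mp (ha k hk))]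
      exact (Finset.mul_prod_erase S (fun i => (a i).factorial) hk).symm
    rw [h1, mul_assoc, Nat.multinomial_spec, hsum]
  rw [Finset.sum_congr rfl hterm, ← Finset.sum_mul, Nat.mul_factorial_pred (Nat.one_le_iff_ne_zero.mp hσpos)]

lemma dysonG_erase {S : Finset (Fin n)} {a : Fin n → ℕ} {k : Fin n} (hk : k ∈ S)
    (hak : a k = 0) :
    dysonG S a = dysonG (S.erase k) a * ∏ i ∈ S.erase k, (X k - X i) ^ (a i) := by
  classical
  rw [dysonG,
    ← Finset.prod_filter_mul_prod_filter_not _ (fun p : Fin n × Fin n => p.1 = k ∨ p.2 = k)]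
  rw [mul_comm]
  congr 1
  · -- non-k pairs give dysonG (S.erase k) a
    rw [dysonG]
    apply Finset.prod_congr
    · ext p
      simp only [Finset.mem_filter, Finset.mem_product, Finset.mem_erase, not_or]
      tauto
    · intros; rfl
  · -- k pairs give the binomial product
    apply Finset.prod_nbij' (i := fun p => if p.1 = k then p.2 else p.1)
        (j := fun j => if j < k then (j, k) else (k, j))
    · rintro ⟨i, j⟩ hp
      simp only [Finset.mem_filter, Finset.mem_product] at hp
      obtain ⟨⟨⟨hi, hj⟩, hij⟩, hor⟩ := hp
      by_cases h1 : i = k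
      · rw [if_pos h1]
        have hkj : k < j := by rw [← h1]; exact hij
        exact Finset.mem_erase.mpr ⟨ne_of_gt hkj, hj⟩
      · rw [if_neg h1]
        rcases hor with h | h
        · exact absurd h h1
        · exact Finset.mem_erase.mpr ⟨h1, hi⟩
    · intro j hj
      rw [Finset.mem_erase] at hj
      by_cases h : j < k
      · rw [if_pos h]
        exact Finset.mem_filter.mpr ⟨Finset.mem_filter.mpr
          ⟨Finset.mem_product.mpr ⟨hj.2, hk⟩, h⟩, Or.inr rfl⟩
      · have hkj : k < j := lt_of_le_of_ne (not_lt.mp h) (Ne.symm hj.1)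
        rw [if_neg h]
        exact Finset.mem_filter.mpr ⟨Finset.mem_filter.mpr
          ⟨Finset.mem_product.mpr ⟨hk, hj.2⟩, hkj⟩, Or.inl rfl⟩
    · rintro ⟨i, j⟩ hp
      simp only [Finset.mem_filter, Finset.mem_product] at hp
      obtain ⟨⟨⟨hi, hj⟩, hij⟩, hor⟩ := hp
      by_cases h1 : i = k
      · rw [if_pos h1]
        have hkj : k < j := by rw [← h1]; exact hij
        rw [if_neg (not_lt.mpr (le_of_lt hkj))]
        rw [h1]
      · rcases hor with h | h
        · exact absurd h h1
        · rw [if_neg h1, if_pos (h ▸ hij), h]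
    · intro j hj
      rw [Finset.mem_erase] at hj
      by_cases h : j < k
      · rw [if_pos h]; rw [if_neg (ne_of_lt h)]
      · have hkj : k < j := lt_of_le_of_ne (not_lt.mp h) (Ne.symm hj.1)
        rw [if_neg h, if_pos rfl]
    · rintro ⟨i, j⟩ hp
      simp only [Finset.mem_filter, Finset.mem_product] at hp
      obtain ⟨⟨⟨hi, hj⟩, hij⟩, hor⟩ := hp
      by_cases h1 : i = k
      · -- (i, j) with i = k : term is (-1)^(a j) (X j - X k)^(a k + a j) = (X k - X j)^(a j)
        have h1' : i = k := h1
        rw [if_pos h1, h1', hak, zero_add]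
        rw [show ((X k : MP n) - X j) ^ (a j) = ((-1) * (X j - X k)) ^ (a j) by ring,
          mul_pow]
      · rcases hor with h | h
        · exact absurd h h1
        · -- (i, k) : term is (-1)^(a k) (X k - X i)^(a i + a k) = (X k - X i)^(a i)
          rw [if_neg h1, h, hak, pow_zero, one_mul, add_zero]

end DysonAux

noncomputable section DysonMain
open MvPolynomial Finset
variable {n : ℕ}

lemma dysonM_apply (S : Finset (Fin n)) (a : Fin n → ℕ) (i : Fin n) :
    dysonM S a i = if i ∈ S then (∑ j ∈ S, a j) - a i else 0 := by
  simp [dysonM]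

lemma sum_single_apply (T : Finset (Fin n)) (i : Fin n) :
    (∑ j ∈ T, Finsupp.single j (1 : ℕ)) i = if i ∈ T then 1 else 0 := by
  classical
  rw [Finset.sum_apply']
  simp [Finsupp.single_apply]

lemma dyson_empty (a : Fin n → ℕ) :
    coeff (dysonM ∅ a) (dysonG ∅ a) = ((Nat.multinomial ∅ a : ℕ) : ℤ) := by
  have hG : dysonG (∅ : Finset (Fin n)) a = 1 := by simp [dysonG]
  have hM : dysonM (∅ : Finset (Fin n)) a = 0 := by
    ext i; rw [dysonM_apply]; simp
  rw [hG, hM, Nat.multinomial_empty]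
  simp

lemma dyson_aux (N : ℕ) (S : Finset (Fin n)) (a : Fin n → ℕ) (h0 : ∀ i ∉ S, a i = 0)
    (hle : (∑ i ∈ S, a i) + S.card ≤ N) :
    coeff (dysonM S a) (dysonG S a) = ((Nat.multinomial S a : ℕ) : ℤ) := by
  classical
  induction N generalizing S a with
  | zero =>
    have hS : S = ∅ := Finset.card_eq_zero.mp (by omega)
    subst hS
    exact dyson_empty a
  | succ N ih =>
    by_cases hSe : S = ∅
    · subst hSe; exact dyson_empty a
    by_cases hz : ∃ k ∈ S, a k = 0
    · -- boundary case
      obtain ⟨k, hk, hak⟩ := hz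
      have hkS' : k ∉ S.erase k := Finset.notMem_erase k S
      have hadd : a k + ∑ i ∈ S.erase k, a i = ∑ i ∈ S, a i := Finset.add_sum_erase S a hk
      have hsum' : ∑ i ∈ S.erase k, a i = ∑ i ∈ S, a i := by omega
      have hM : dysonM S a
          = dysonM (S.erase k) a + Finsupp.single k (∑ i ∈ S.erase k, a i) := by
        ext i
        rw [Finsupp.add_apply, dysonM_apply, dysonM_apply, Finsupp.single_apply, hsum']
        by_cases h1 : i = k
        · subst h1
          rw [if_pos hk, if_neg (Finset.notMem_erase i S), if_pos rfl, hak, zero_add]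
          omega
        · rw [if_neg (fun h => h1 h.symm : ¬ k = i), add_zero]
          by_cases h2 : i ∈ S
          · rw [if_pos h2, if_pos (Finset.mem_erase.mpr ⟨h1, h2⟩)]
          · rw [if_neg h2, if_neg (fun hc => h2 (Finset.mem_of_mem_erase hc))]
      rw [hM, dysonG_erase hk hak,
        coeff_boundary hkS' _ (dysonG_support a hkS') _ _
          (by rw [dysonM_apply, if_neg hkS'])]
      have hmult : Nat.multinomial S a = Nat.multinomial (S.erase k) a := by
        conv_lhs => rw [← Finset.insert_erase hk]
        rw [Nat.multinomial_insert (Finset.notMem_erase k S), hak]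
        simp
      rw [hmult]
      apply ih
      · intro i hi
        by_cases h1 : i = k
        · subst h1; exact hak
        · exact h0 i (fun hiS => hi (Finset.mem_erase.mpr ⟨h1, hiS⟩))
      · have hcard : (S.erase k).card = S.card - 1 := Finset.card_erase_of_mem hk
        have hcpos : 1 ≤ S.card := Finset.card_pos.mpr ⟨k, hk⟩
        omega
    · -- recursion case
      push_neg at hz
      have ha1 : ∀ i ∈ S, 1 ≤ a i := fun i hi => Nat.one_le_iff_ne_zero.mpr (hz i hi)
      have hS : S.Nonempty := Finset.nonempty_iff_ne_empty.mpr hSe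
      rw [dysonG_rec hS ha1, coeff_sum]
      have hterm : ∀ k ∈ S,
          coeff (dysonM S a)
            (dysonG S (Function.update a k (a k - 1)) * ∏ j ∈ S.erase k, X j)
          = ((Nat.multinomial S (Function.update a k (a k - 1)) : ℕ) : ℤ) := by
        intro k hk
        set a' := Function.update a k (a k - 1) with ha'
        have hak : 1 ≤ a k := ha1 k hk
        have hadd : a k + ∑ i ∈ S.erase k, a i = ∑ i ∈ S, a i := Finset.add_sum_erase S a hk
        have hsum' : ∑ i ∈ S, a' i = (∑ i ∈ S, a i) - 1 := by
          have hs1 : ∑ i ∈ S.erase k, a' i = ∑ i ∈ S.erase k, a i :=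
            Finset.sum_congr rfl
              (fun i hi => Function.update_of_ne (Finset.mem_erase.mp hi).1 _ _)
          rw [← Finset.add_sum_erase _ _ hk, hs1, ha', Function.update_self]
          omega
        have hM : dysonM S a = dysonM S a' + ∑ j ∈ S.erase k, Finsupp.single j 1 := by
          ext i
          rw [Finsupp.add_apply, dysonM_apply, dysonM_apply, sum_single_apply, hsum']
          by_cases h1 : i = k
          · subst h1
            rw [if_pos hk, if_pos hk, if_neg (Finset.notMem_erase i S), ha',
              Function.update_self, add_zero]
            omega
          · by_cases h2 : i ∈ S
            · have hie : i ∈ S.erase k := Finset.mem_erase.mpr ⟨h1, h2⟩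
              have hile : a i ≤ ∑ j ∈ S.erase k, a j :=
                Finset.single_le_sum (fun _ _ => Nat.zero_le _) hie
              rw [if_pos h2, if_pos h2, if_pos hie, ha', Function.update_of_ne h1]
              omega
            · rw [if_neg h2, if_neg h2,
                if_neg (fun hc => h2 (Finset.mem_of_mem_erase hc)), add_zero]
        rw [hM, coeff_mul_prod_X]
        apply ih
        · intro i hi
          have h1 : i ≠ k := fun h => hi (h ▸ hk)
          rw [ha', Function.update_of_ne h1]
          exact h0 i hi
        · omega
      rw [Finset.sum_congr rfl hterm, mult_rec hS ha1]
      push_cast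
      rfl

end DysonMain

/-- Dyson's conjecture. -/
theorem dyson_conjecture (n : ℕ) (a : Fin n → ℕ) (ha : ∀ i, 0 < a i) :
    MvPolynomial.coeff
        (Finsupp.equivFunOnFinite.symm (fun i => (∑ j, a j) - a i))
        (∏ i : Fin n, ∏ j ∈ Finset.Ioi i,
          ((-1) ^ (a j) * (MvPolynomial.X j - MvPolynomial.X i) ^ (a i + a j) :
            MvPolynomial (Fin n) ℤ)) =
      (((∑ i, a i).factorial / ∏ i, (a i).factorial : ℕ) : ℤ) := by
  classical
  have hG : (∏ i : Fin n, ∏ j ∈ Finset.Ioi i,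
      ((-1) ^ (a j) * (MvPolynomial.X j - MvPolynomial.X i) ^ (a i + a j) :
        MvPolynomial (Fin n) ℤ)) = dysonG Finset.univ a := by
    rw [dysonG, ← prod_pairs Finset.univ
      (fun i j => (-1) ^ (a j) * (X j - X i) ^ (a i + a j))]
    apply Finset.prod_congr rfl
    intro i _
    apply Finset.prod_congr
    · ext j; simp
    · intros; rfl
  have hM : (Finsupp.equivFunOnFinite.symm (fun i => (∑ j, a j) - a i) : Fin n →₀ ℕ)
      = dysonM Finset.univ a := by
    rw [dysonM]
    congr 1
    funext i
    simp
  rw [hG, hM, dyson_aux ((∑ i, a i) + n) Finset.univ a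
    (fun i hi => absurd (Finset.mem_univ i) hi) (by simp)]
  rfl
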